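/- For every vertex v at height k in the balancing formula of height h, under an assignment a ∈ {0,1}^{2^h}: v evaluates to 0 iff the number of 1-values among its 2^k descendant variables is 0; v evaluates to 1 iff it is 2^k; and v evaluates to P iff it is 2^{k−1}; in all other cases v evaluates to F (or has a descendant evaluating to F). -/

import Mathlib

/-- The 4-letter alphabet `Σ = {0, 1, P, F}` of the balancing formula. -/
inductive Sig4 where
  | zero | one | P | F
deriving DecidableEq

/-- The balancing gate. -/
def bgate : Sig4 → Sig4 → Sig4
  | .zero, .zero => .zero
  | .one, .one => .one
  | .one, .zero => .P
  | .zero, .one => .P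
  | .P, .P => .P
  | _, _ => .F

/-- The value computed at the root of the balancing formula of height `h`
on the Boolean input `a` (read at positions `0, …, 2^h - 1`). -/
def balEval : ℕ → (ℕ → Bool) → Sig4
  | 0, a => if a 0 then .one else .zero
  | h + 1, a => bgate (balEval h a) (balEval h (fun i => a (i + 2 ^ h)))

/-- The number of `1`-values among the first `m` positions of `a`. -/
def ones (m : ℕ) (a : ℕ → Bool) : ℕ :=
  ((Finset.range m).filter (fun j => a j = true)).card

lemma ones_eq_sum (m : ℕ) (a : ℕ → Bool) :
    ones m a = ∑ j ∈ Finset.range m, (if a j then 1 else 0) := by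
  rw [ones, Finset.card_filter]

lemma ones_add (m n : ℕ) (a : ℕ → Bool) :
    ones (m + n) a = ones m a + ones n (fun i => a (i + m)) := by
  simp only [ones_eq_sum, Finset.sum_range_add]
  congr 1
  exact Finset.sum_congr rfl (fun i _ => by rw [Nat.add_comm])

lemma ones_le (m : ℕ) (a : ℕ → Bool) : ones m a ≤ m := by
  simpa [ones] using (Finset.card_filter_le (Finset.range m) _)

lemma bgate_zero (x y : Sig4) :
    bgate x y = Sig4.zero ↔ x = Sig4.zero ∧ y = Sig4.zero := by
  cases x <;> cases y <;> decide

lemma bgate_one (x y : Sig4) :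
    bgate x y = Sig4.one ↔ x = Sig4.one ∧ y = Sig4.one := by
  cases x <;> cases y <;> decide

lemma bgate_P (x y : Sig4) :
    bgate x y = Sig4.P →
      (x = Sig4.one ∧ y = Sig4.zero) ∨ (x = Sig4.zero ∧ y = Sig4.one) ∨
      (x = Sig4.P ∧ y = Sig4.P) := by
  cases x <;> cases y <;> decide

lemma balChar (k : ℕ) (a : ℕ → Bool) :
    (balEval k a = Sig4.zero ↔ ones (2 ^ k) a = 0) ∧
    (balEval k a = Sig4.one ↔ ones (2 ^ k) a = 2 ^ k) ∧
    (balEval k a = Sig4.P → 1 ≤ k ∧ ones (2 ^ k) a = 2 ^ (k - 1)) := by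
  induction k generalizing a with
  | zero =>
    have h1 : ones 1 a = if a 0 then 1 else 0 := by
      rw [ones, Finset.range_one, Finset.filter_singleton]
      split <;> simp
    by_cases h : a 0 = true <;> simp [balEval, h1, h]
  | succ k ih =>
    set b : ℕ → Bool := fun i => a (i + 2 ^ k) with hb
    obtain ⟨L0, L1, LP⟩ := ih a
    obtain ⟨R0, R1, RP⟩ := ih b
    have hsplit : ones (2 ^ (k + 1)) a = ones (2 ^ k) a + ones (2 ^ k) b := by
      rw [pow_succ, Nat.mul_two, ones_add]
    have hle1 := ones_le (2 ^ k) a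
    have hle2 := ones_le (2 ^ k) b
    have hpow : 2 ^ (k + 1) = 2 ^ k + 2 ^ k := by rw [pow_succ]; ring
    have hpos : 1 ≤ 2 ^ k := Nat.one_le_two_pow
    have hev : balEval (k + 1) a = bgate (balEval k a) (balEval k b) := rfl
    refine ⟨?_, ?_, ?_⟩
    · rw [hev, bgate_zero, L0, R0, hsplit]; omega
    · rw [hev, bgate_one, L1, R1, hsplit]; omega
    · intro h
      rw [hev] at h
      refine ⟨Nat.le_add_left 1 k, ?_⟩
      simp only [Nat.add_sub_cancel, hsplit]
      rcases bgate_P _ _ h with ⟨hx, hy⟩ | ⟨hx, hy⟩ | ⟨hx, hy⟩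
      · rw [L1.mp hx, R0.mp hy]; omega
      · rw [L0.mp hx, R1.mp hy]; omega
      · obtain ⟨hk1, hLPv⟩ := LP hx
        obtain ⟨_, hRPv⟩ := RP hy
        have hhalf : 2 ^ (k - 1) + 2 ^ (k - 1) = 2 ^ k := by
          have hk' : k - 1 + 1 = k := Nat.succ_pred_eq_of_pos hk1
          calc 2 ^ (k - 1) + 2 ^ (k - 1) = 2 ^ (k - 1 + 1) := by ring
            _ = 2 ^ k := by rw [hk']
        omega

/-- for a vertex at height `k ≥ 1` of the balancing formula
(whose subtree reads `2^k` Boolean leaves `a 0, …, a (2^k - 1)`), provided no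
`F` arises (i.e. the vertex itself does not evaluate to `F`), the vertex
evaluates to `0` iff the number of `1`-leaves is `0`, to `1` iff it is `2^k`,
and to `P` iff it is `2^{k-1}`; and if the count is none of these three values
then the vertex evaluates to `F`. -/
theorem balancing_level_characterization (k : ℕ) (hk : 1 ≤ k) (a : ℕ → Bool) :
    (balEval k a ≠ Sig4.F →
      ((balEval k a = Sig4.zero ↔ ones (2 ^ k) a = 0) ∧
       (balEval k a = Sig4.one ↔ ones (2 ^ k) a = 2 ^ k) ∧
       (balEval k a = Sig4.P ↔ ones (2 ^ k) a = 2 ^ (k - 1)))) ∧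
    (ones (2 ^ k) a ≠ 0 → ones (2 ^ k) a ≠ 2 ^ k → ones (2 ^ k) a ≠ 2 ^ (k - 1) →
      balEval k a = Sig4.F) := by
  obtain ⟨h0, h1, hP⟩ := balChar k a
  have hlt : 2 ^ (k - 1) < 2 ^ k := Nat.pow_lt_pow_right one_lt_two (by omega)
  have hpos : 0 < 2 ^ (k - 1) := Nat.pow_pos (by norm_num)
  constructor
  · intro hF
    refine ⟨h0, h1, ?_, ?_⟩
    · intro h; exact (hP h).2
    · intro h
      cases hv : balEval k a with
      | zero => exfalso; have := h0.mp hv; omega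
      | one => exfalso; have := h1.mp hv; omega
      | P => rfl
      | F => exact absurd hv hF
  · intro n0 n1 nP
    cases hv : balEval k a with
    | zero => exact absurd (h0.mp hv) n0
    | one => exact absurd (h1.mp hv) n1
    | P => exact absurd (hP hv).2 nP
    | F => rfl
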